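/- If w is an A_2 weight on R^n, then there exist constants η ∈ (0,1) and β > 0, depending only on n and [w]_{A_2}, such that β^{-1}(|E|/|Q|)^{1/(2η)} ≤ w(E)/w(Q) ≤ β(|E|/|Q|)^{2η} for every cube Q and every measurable subset E ⊂ Q. -/

import Mathlib

open MeasureTheory Set
open scoped ENNReal NNReal

noncomputable section

/-- The open cube in `ℝⁿ` with center `z` and half side length `r`. -/
def cube (n : ℕ) (z : Fin n → ℝ) (r : ℝ) : Set (Fin n → ℝ) :=
  {x | ∀ i, |x i - z i| < r}

/-- `w` is a Muckenhoupt `A₂` weight on `ℝⁿ` with `A₂`-constant (at most) `C`. -/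
def IsA2 (n : ℕ) (w : (Fin n → ℝ) → ℝ) (C : ℝ) : Prop :=
  (∀ x, 0 < w x) ∧ LocallyIntegrable w ∧ LocallyIntegrable (fun x => (w x)⁻¹) ∧
    ∀ z r, 0 < r →
      (∫ x in cube n z r, w x) * (∫ x in cube n z r, (w x)⁻¹) ≤
        C * ((volume (cube n z r)).toReal) ^ 2

namespace A2proof

/-! ### Geometry of cubes -/

lemma cube_eq_pi (n : ℕ) (z : Fin n → ℝ) (r : ℝ) :
    cube n z r = Set.pi univ (fun i => Ioo (z i - r) (z i + r)) := by
  ext x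
  simp only [cube, mem_setOf_eq, Set.mem_pi, mem_univ, forall_true_left, mem_Ioo]
  refine forall_congr' fun i => ?_
  rw [abs_sub_lt_iff]
  constructor <;> intro h <;> constructor <;> linarith [h.1, h.2]

lemma measurableSet_cube (n : ℕ) (z : Fin n → ℝ) (r : ℝ) : MeasurableSet (cube n z r) := by
  rw [cube_eq_pi]
  exact MeasurableSet.univ_pi fun i => measurableSet_Ioo

lemma volume_cube (n : ℕ) (z : Fin n → ℝ) (r : ℝ) :
    volume (cube n z r) = (ENNReal.ofReal (2 * r)) ^ n := by
  rw [cube_eq_pi, volume_pi_pi]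
  simp only [Real.volume_Ioo]
  have : ∀ i : Fin n, z i + r - (z i - r) = 2 * r := fun i => by ring
  simp [this]

lemma volume_cube_pos (n : ℕ) (z : Fin n → ℝ) {r : ℝ} (hr : 0 < r) :
    0 < volume (cube n z r) := by
  rw [volume_cube]
  exact ENNReal.pow_pos (by simp [ENNReal.ofReal_pos]; linarith) n

lemma volume_cube_ne_top (n : ℕ) (z : Fin n → ℝ) (r : ℝ) :
    volume (cube n z r) ≠ ∞ := by
  rw [volume_cube]
  exact ENNReal.pow_ne_top ENNReal.ofReal_ne_top

lemma cube_subset_compact (n : ℕ) (z : Fin n → ℝ) (r : ℝ) :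
    cube n z r ⊆ Set.pi univ (fun i => Icc (z i - r) (z i + r)) := by
  rw [cube_eq_pi]
  exact Set.pi_mono fun i _ => Ioo_subset_Icc_self

/-! ### Dyadic subcubes -/

/-- dyadic subcube of generation `j`, index `m`. -/
def dc (n : ℕ) (z : Fin n → ℝ) (r : ℝ) (j : ℕ) (m : Fin n → ℕ) : Set (Fin n → ℝ) :=
  cube n (fun i => z i - r + (2 * (m i : ℝ) + 1) * (r / 2 ^ j)) (r / 2 ^ j)

lemma mem_dc_iff {n : ℕ} {z : Fin n → ℝ} {r : ℝ} {j : ℕ} {m : Fin n → ℕ} {x : Fin n → ℝ} :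
    x ∈ dc n z r j m ↔ ∀ i,
      2 * (m i : ℝ) * (r / 2 ^ j) < x i - (z i - r) ∧
      x i - (z i - r) < (2 * (m i : ℝ) + 2) * (r / 2 ^ j) := by
  simp only [dc, cube, mem_setOf_eq]
  refine forall_congr' fun i => ?_
  rw [abs_sub_lt_iff]
  constructor <;> intro h <;> constructor <;> nlinarith [h.1, h.2]

lemma measurableSet_dc (n : ℕ) (z : Fin n → ℝ) (r : ℝ) (j : ℕ) (m : Fin n → ℕ) :
    MeasurableSet (dc n z r j m) := measurableSet_cube n _ _

lemma dc_zero (n : ℕ) (z : Fin n → ℝ) (r : ℝ) : dc n z r 0 (fun _ => 0) = cube n z r := by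
  ext x
  rw [mem_dc_iff]
  simp only [cube, mem_setOf_eq, Nat.cast_zero, pow_zero, div_one]
  refine forall_congr' fun i => ?_
  rw [abs_sub_lt_iff]
  constructor <;> intro h <;> constructor <;> linarith [h.1, h.2]

def Valid (n j : ℕ) (m : Fin n → ℕ) : Prop := ∀ i, m i < 2 ^ j

lemma dc_subset_root {n : ℕ} {z : Fin n → ℝ} {r : ℝ} (hr : 0 < r) {j : ℕ} {m : Fin n → ℕ}
    (hm : Valid n j m) : dc n z r j m ⊆ cube n z r := by
  intro x hx
  rw [mem_dc_iff] at hx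
  intro i
  have h1 := (hx i).1
  have h2 := (hx i).2
  have hmi : (m i : ℝ) + 1 ≤ 2 ^ j := by exact_mod_cast Nat.succ_le_of_lt (hm i)
  have hp : (0:ℝ) < 2 ^ j := by positivity
  have hh : 0 < r / 2 ^ j := by positivity
  have hb : (2 * (m i : ℝ) + 2) * (r / 2 ^ j) ≤ 2 * r := by
    rw [div_eq_mul_inv]
    have h2j : ((2:ℝ) ^ j)⁻¹ * (2:ℝ)^j = 1 := inv_mul_cancel₀ (by positivity)
    nlinarith [mul_pos hr (inv_pos.mpr hp)]
  have hlow : (0:ℝ) ≤ 2 * (m i : ℝ) * (r / 2 ^ j) := by positivity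
  rw [abs_sub_lt_iff]
  constructor <;> linarith

lemma dc_nest {n : ℕ} {z : Fin n → ℝ} {r : ℝ} (hr : 0 < r) {j : ℕ} {m : Fin n → ℕ} :
    dc n z r (j+1) m ⊆ dc n z r j (fun i => m i / 2) := by
  intro x hx
  rw [mem_dc_iff] at hx ⊢
  intro i
  obtain ⟨h1, h2⟩ := hx i
  have hq : m i = 2 * (m i / 2) + m i % 2 := by omega
  have hb : m i % 2 ≤ 1 := by omega
  have hp : (0:ℝ) < 2 ^ j := by positivity
  have hh : 0 < r / 2 ^ (j+1) := by positivity
  have hsucc : r / 2 ^ (j+1) = (r / 2 ^ j) / 2 := by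
    rw [pow_succ]; ring
  have hcast : (m i : ℝ) = 2 * ((m i / 2 : ℕ) : ℝ) + ((m i % 2 : ℕ) : ℝ) := by
    exact_mod_cast congrArg (Nat.cast : ℕ → ℝ) hq
  have hbcast : ((m i % 2 : ℕ) : ℝ) ≤ 1 := by exact_mod_cast hb
  have hb0 : (0:ℝ) ≤ ((m i % 2 : ℕ) : ℝ) := by positivity
  constructor
  · nlinarith [h1]
  · nlinarith [h2]

lemma dc_anc {n : ℕ} {z : Fin n → ℝ} {r : ℝ} (hr : 0 < r) (j d : ℕ) (m : Fin n → ℕ) :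
    dc n z r (j + d) m ⊆ dc n z r j (fun i => m i / 2 ^ d) := by
  induction d generalizing m with
  | zero =>
    have h : (fun i => m i / 2 ^ 0) = m := funext fun i => by simp
    rw [h]
    exact subset_rfl
  | succ d ih =>
    have h1 : dc n z r (j + (d+1)) m ⊆ dc n z r (j + d) (fun i => m i / 2) := by
      have := dc_nest (n := n) (z := z) (r := r) hr (j := j + d) (m := m)
      exact this
    refine h1.trans ?_
    have h2 := ih (fun i => m i / 2)
    have h3 : (fun i => m i / 2 / 2 ^ d) = fun i => m i / 2 ^ (d + 1) := by
      funext i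
      rw [Nat.div_div_eq_div_mul, ← pow_succ']
    rw [h3] at h2
    exact h2

lemma valid_anc {n j d : ℕ} {m : Fin n → ℕ} (hm : Valid n (j + d) m) :
    Valid n j (fun i => m i / 2 ^ d) := by
  intro i
  have := hm i
  rw [Nat.div_lt_iff_lt_mul (by positivity)]
  calc m i < 2 ^ (j + d) := this
  _ = 2 ^ j * 2 ^ d := pow_add 2 j d

lemma dc_eq_of_mem {n : ℕ} {z : Fin n → ℝ} {r : ℝ} (hr : 0 < r) {j : ℕ} {m m' : Fin n → ℕ}
    {x : Fin n → ℝ} (hx : x ∈ dc n z r j m) (hx' : x ∈ dc n z r j m') : m = m' := by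
  rw [mem_dc_iff] at hx hx'
  funext i
  by_contra hne
  have hh : 0 < r / 2 ^ j := by positivity
  rcases lt_trichotomy (m i) (m' i) with h | h | h
  · have : (m i : ℝ) + 1 ≤ (m' i : ℝ) := by exact_mod_cast Nat.succ_le_of_lt h
    nlinarith [(hx i).2, (hx' i).1]
  · exact hne h
  · have : (m' i : ℝ) + 1 ≤ (m i : ℝ) := by exact_mod_cast Nat.succ_le_of_lt h
    nlinarith [(hx' i).2, (hx i).1]

lemma volume_dc (n : ℕ) (z : Fin n → ℝ) (r : ℝ) (j : ℕ) (m : Fin n → ℕ) :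
    volume (dc n z r j m) = (ENNReal.ofReal (2 * (r / 2 ^ j))) ^ n :=
  volume_cube n _ _

lemma volume_dc_succ {n : ℕ} (z : Fin n → ℝ) {r : ℝ} (hr : 0 < r) (j : ℕ)
    (m m' : Fin n → ℕ) :
    volume (dc n z r j m) = 2 ^ n * volume (dc n z r (j+1) m') := by
  rw [volume_dc, volume_dc, ← mul_pow]
  congr 1
  rw [← ENNReal.ofReal_ofNat 2, ← ENNReal.ofReal_mul (by norm_num)]
  congr 1
  rw [pow_succ]
  ring

/-! ### Grid boundaries -/

def bad (n : ℕ) (z : Fin n → ℝ) (r : ℝ) : Set (Fin n → ℝ) :=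
  ⋃ (j : ℕ), ⋃ (i : Fin n), ⋃ (q : ℤ), {x | x i = z i - r + (r / 2 ^ j) * q}

lemma measurableSet_hyperplane {n : ℕ} (i : Fin n) (a : ℝ) :
    MeasurableSet {x : Fin n → ℝ | x i = a} :=
  measurableSet_eq_fun (measurable_pi_apply i) measurable_const

lemma volume_hyperplane {n : ℕ} (i : Fin n) (a : ℝ) :
    volume {x : Fin n → ℝ | x i = a} = 0 := by
  have h : {x : Fin n → ℝ | x i = a}
      = Set.pi univ (Function.update (fun _ : Fin n => (univ : Set ℝ)) i {a}) := by
    ext x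
    simp only [mem_setOf_eq, Set.mem_pi, mem_univ, forall_true_left]
    constructor
    · intro hx k
      rcases eq_or_ne k i with rfl | hk
      · simp [hx]
      · simp [Function.update_of_ne hk]
    · intro hx
      have := hx i
      simpa using this
  rw [h, volume_pi_pi]
  refine Finset.prod_eq_zero (Finset.mem_univ i) ?_
  simp

lemma volume_bad (n : ℕ) (z : Fin n → ℝ) (r : ℝ) : volume (bad n z r) = 0 := by
  refine measure_iUnion_null fun j => measure_iUnion_null fun i => measure_iUnion_null fun q => ?_
  exact volume_hyperplane i _

lemma measurableSet_bad (n : ℕ) (z : Fin n → ℝ) (r : ℝ) : MeasurableSet (bad n z r) := by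
  refine MeasurableSet.iUnion fun j => MeasurableSet.iUnion fun i =>
    MeasurableSet.iUnion fun q => ?_
  exact measurableSet_hyperplane i _

/-- index of the generation-`j` dyadic cube containing `x`. -/
def mk (n : ℕ) (z : Fin n → ℝ) (r : ℝ) (j : ℕ) (x : Fin n → ℝ) : Fin n → ℕ :=
  fun i => (⌊(x i - (z i - r)) / (2 * (r / 2 ^ j))⌋).toNat

lemma mem_dc_mk {n : ℕ} {z : Fin n → ℝ} {r : ℝ} (hr : 0 < r) {x : Fin n → ℝ}
    (hx : x ∈ cube n z r) (hxb : x ∉ bad n z r) (j : ℕ) :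
    x ∈ dc n z r j (mk n z r j x) ∧ Valid n j (mk n z r j x) := by
  have hp : (0:ℝ) < 2 ^ j := by positivity
  have hh : (0:ℝ) < 2 * (r / 2 ^ j) := by positivity
  have key : ∀ i, (2 * ((mk n z r j x i : ℝ)) * (r / 2 ^ j) < x i - (z i - r) ∧
      x i - (z i - r) < (2 * (mk n z r j x i : ℝ) + 2) * (r / 2 ^ j)) ∧
      mk n z r j x i < 2 ^ j := by
    intro i
    set u : ℝ := x i - (z i - r) with hu
    have hu0 : 0 < u := by
      have := hx i
      rw [abs_sub_lt_iff] at this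
      simp only [hu]
      linarith [this.2]
    have hu2 : u < 2 * r := by
      have := hx i
      rw [abs_sub_lt_iff] at this
      simp only [hu]
      linarith [this.1]
    set q : ℤ := ⌊u / (2 * (r / 2 ^ j))⌋ with hqdef
    have hq0 : 0 ≤ q := Int.floor_nonneg.mpr (by positivity)
    have hfl := Int.floor_le (u / (2 * (r / 2 ^ j)))
    have hfl2 := Int.lt_floor_add_one (u / (2 * (r / 2 ^ j)))
    have hqu : (q : ℝ) * (2 * (r / 2 ^ j)) ≤ u := by
      rw [← le_div_iff₀ hh]; exact hfl
    have hqu2 : u < ((q : ℝ) + 1) * (2 * (r / 2 ^ j)) := by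
      rw [← div_lt_iff₀ hh]; exact hfl2
    have hne : u ≠ (q : ℝ) * (2 * (r / 2 ^ j)) := by
      intro he
      apply hxb
      refine mem_iUnion.mpr ⟨j, mem_iUnion.mpr ⟨i, mem_iUnion.mpr ⟨2 * q, ?_⟩⟩⟩
      simp only [mem_setOf_eq]
      have : x i = z i - r + u := by simp only [hu]; ring
      rw [this, he]
      push_cast
      ring
    have hqlt : q < 2 ^ j := by
      have h1 : (q : ℝ) * (2 * (r / 2 ^ j)) < 2 * r := lt_of_le_of_lt hqu hu2
      have h2r : (2:ℝ) * r = (2 ^ j : ℝ) * (2 * (r / 2 ^ j)) := by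
        field_simp
      rw [h2r] at h1
      have := lt_of_mul_lt_mul_right h1 (le_of_lt hh)
      exact_mod_cast this
    have hcast : ((mk n z r j x i : ℝ)) = (q : ℝ) := by
      simp only [mk, ← hu, ← hqdef]
      exact_mod_cast congrArg (Int.cast : ℤ → ℝ) (Int.toNat_of_nonneg hq0)
    refine ⟨⟨?_, ?_⟩, ?_⟩
    · rw [hcast]
      have h1 : (q:ℝ) * (2 * (r / 2 ^ j)) < u := lt_of_le_of_ne hqu (Ne.symm hne)
      nlinarith
    · rw [hcast]; nlinarith
    · have hmq : (mk n z r j x i : ℤ) = q := by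
        simp only [mk, ← hu, ← hqdef]
        exact Int.toNat_of_nonneg hq0
      have h2 : (mk n z r j x i : ℤ) < 2 ^ j := hmq ▸ hqlt
      exact_mod_cast h2
  constructor
  · rw [mem_dc_iff]
    exact fun i => (key i).1
  · exact fun i => (key i).2

/-- within an open set `U`, a sufficiently deep dyadic cube around `x ∈ U` stays in `U`. -/
lemma exists_dc_subset_open {n : ℕ} {z : Fin n → ℝ} {r : ℝ} (hr : 0 < r) {x : Fin n → ℝ}
    (hx : x ∈ cube n z r) (hxb : x ∉ bad n z r) {U : Set (Fin n → ℝ)}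
    (hU : IsOpen U) (hxU : x ∈ U) :
    ∃ j, dc n z r j (mk n z r j x) ⊆ U := by
  obtain ⟨ε, hε, hball⟩ := Metric.isOpen_iff.mp hU x hxU
  obtain ⟨j, hj⟩ := pow_unbounded_of_one_lt (2 * r / ε) (one_lt_two)
  refine ⟨j, fun y hy => ?_⟩
  apply hball
  rw [Metric.mem_ball]
  have hxd := (mem_dc_mk hr hx hxb j).1
  have hp : (0:ℝ) < 2 ^ j := by positivity
  have hdist : ∀ i, dist (y i) (x i) < ε := by
    intro i
    have h1 : |y i - (z i - r + (2 * (mk n z r j x i : ℝ) + 1) * (r / 2 ^ j))| < r / 2 ^ j := hy i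
    have h2 : |x i - (z i - r + (2 * (mk n z r j x i : ℝ) + 1) * (r / 2 ^ j))| < r / 2 ^ j := hxd i
    have h3 : 2 * (r / 2 ^ j) < ε := by
      rw [div_lt_iff₀ hε] at hj
      have he : 2 * (r / 2 ^ j) = (2 * r) / 2 ^ j := by ring
      rw [he, div_lt_iff₀ hp]
      linarith
    rw [Real.dist_eq]
    calc |y i - x i| ≤ |y i - (z i - r + (2 * (mk n z r j x i : ℝ) + 1) * (r / 2 ^ j))| +
          |(z i - r + (2 * (mk n z r j x i : ℝ) + 1) * (r / 2 ^ j)) - x i| := abs_sub_le _ _ _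
    _ = |y i - (z i - r + (2 * (mk n z r j x i : ℝ) + 1) * (r / 2 ^ j))| +
          |x i - (z i - r + (2 * (mk n z r j x i : ℝ) + 1) * (r / 2 ^ j))| := by
          rw [abs_sub_comm (z i - r + (2 * (mk n z r j x i : ℝ) + 1) * (r / 2 ^ j))]
    _ < r / 2 ^ j + r / 2 ^ j := add_lt_add h1 h2
    _ = 2 * (r / 2 ^ j) := by ring
    _ < ε := h3
  exact (dist_pi_lt_iff hε).mpr hdist

/-! ### The weight measures -/

/-- the measure with density `w`. -/
def wm {n : ℕ} (w : (Fin n → ℝ) → ℝ) : Measure (Fin n → ℝ) :=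
  volume.withDensity (fun x => ENNReal.ofReal (w x))

lemma wm_apply {n : ℕ} {w : (Fin n → ℝ) → ℝ} {s : Set (Fin n → ℝ)} (hs : MeasurableSet s) :
    wm w s = ∫⁻ x in s, ENNReal.ofReal (w x) := withDensity_apply _ hs

lemma integrableOn_cube {n : ℕ} {w : (Fin n → ℝ) → ℝ} (hw : LocallyIntegrable w)
    (z : Fin n → ℝ) (r : ℝ) : IntegrableOn w (cube n z r) := by
  refine IntegrableOn.mono_set ?_ (cube_subset_compact n z r)
  exact hw.integrableOn_isCompact (isCompact_univ_pi fun i => isCompact_Icc)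

lemma wm_eq_ofReal_integral {n : ℕ} {w : (Fin n → ℝ) → ℝ} (hpos : ∀ x, 0 < w x)
    {s : Set (Fin n → ℝ)} (hs : MeasurableSet s) (hi : IntegrableOn w s) :
    wm w s = ENNReal.ofReal (∫ x in s, w x) := by
  rw [wm_apply hs, ofReal_integral_eq_lintegral_ofReal hi
    (Filter.Eventually.of_forall fun x => (hpos x).le)]

lemma wm_cube_lt_top {n : ℕ} {w : (Fin n → ℝ) → ℝ} (hpos : ∀ x, 0 < w x)
    (hw : LocallyIntegrable w) (z : Fin n → ℝ) (r : ℝ) : wm w (cube n z r) ≠ ∞ := by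
  rw [wm_eq_ofReal_integral hpos (measurableSet_cube n z r) (integrableOn_cube hw z r)]
  exact ENNReal.ofReal_ne_top

lemma wm_cube_pos {n : ℕ} {w : (Fin n → ℝ) → ℝ} (hpos : ∀ x, 0 < w x)
    (hw : LocallyIntegrable w) (z : Fin n → ℝ) {r : ℝ} (hr : 0 < r) :
    0 < wm w (cube n z r) := by
  rw [wm_apply (measurableSet_cube n z r)]
  rcases eq_zero_or_pos (∫⁻ x in cube n z r, ENNReal.ofReal (w x)) with h | h
  · exfalso
    have haem : AEMeasurable (fun x => ENNReal.ofReal (w x))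
        (volume.restrict (cube n z r)) :=
      (ENNReal.measurable_ofReal.comp_aemeasurable
        (hw.aestronglyMeasurable.aemeasurable.restrict))
    rw [lintegral_eq_zero_iff' haem] at h
    have h2 : (volume.restrict (cube n z r)) {x | ¬ (ENNReal.ofReal (w x) = 0)} = 0 := h
    have h3 : {x : Fin n → ℝ | ¬ (ENNReal.ofReal (w x) = 0)} = univ := by
      ext x
      simp [ENNReal.ofReal_eq_zero, not_le, hpos x]
    rw [h3, Measure.restrict_apply_univ] at h2
    exact absurd h2 (ne_of_gt (volume_cube_pos n z hr))
  · exact h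

/-- The key Cauchy-Schwarz consequence of the A₂ condition. -/
lemma wm_star {n : ℕ} {w : (Fin n → ℝ) → ℝ} {C : ℝ} (hpos : ∀ x, 0 < w x)
    (hw : LocallyIntegrable w) (hw' : LocallyIntegrable (fun x => (w x)⁻¹))
    (hA2 : ∀ z r, 0 < r → wm w (cube n z r) * wm (fun x => (w x)⁻¹) (cube n z r) ≤
      ENNReal.ofReal C * (volume (cube n z r)) ^ 2)
    (z : Fin n → ℝ) {r : ℝ} (hr : 0 < r) {A : Set (Fin n → ℝ)}
    (hA : A ⊆ cube n z r) (hAm : MeasurableSet A) :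
    (volume A) ^ 2 * wm w (cube n z r) ≤
      ENNReal.ofReal C * (volume (cube n z r)) ^ 2 * wm w A := by
  set W : (Fin n → ℝ) → ℝ≥0∞ := fun x => ENNReal.ofReal (w x) with hW
  set W' : (Fin n → ℝ) → ℝ≥0∞ := fun x => ENNReal.ofReal ((w x)⁻¹) with hW'
  have hWmeas : AEMeasurable W (volume.restrict A) :=
    ENNReal.measurable_ofReal.comp_aemeasurable (hw.aestronglyMeasurable.aemeasurable.restrict)
  have hW'meas : AEMeasurable W' (volume.restrict A) :=
    ENNReal.measurable_ofReal.comp_aemeasurable (hw'.aestronglyMeasurable.aemeasurable.restrict)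
  -- Cauchy-Schwarz
  have hCS : volume A ≤ (wm w A) ^ ((1:ℝ)/2) * (wm (fun x => (w x)⁻¹) A) ^ ((1:ℝ)/2) := by
    have hone : ∀ x, (1:ℝ≥0∞) = (W x) ^ ((1:ℝ)/2) * (W' x) ^ ((1:ℝ)/2) := by
      intro x
      have h0 : W x ≠ 0 := by
        simp [hW, ENNReal.ofReal_eq_zero, not_le, hpos x]
      have htop : W x ≠ ∞ := ENNReal.ofReal_ne_top
      have hinv : W' x = (W x)⁻¹ := by
        simp only [hW, hW']
        rw [ENNReal.ofReal_inv_of_pos (hpos x)]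
      rw [hinv, ENNReal.inv_rpow]
      rw [ENNReal.mul_inv_cancel
        (ENNReal.rpow_pos (lt_of_le_of_ne zero_le (Ne.symm h0)) htop).ne'
        (ENNReal.rpow_ne_top_of_nonneg (by norm_num) htop)]
    have h1 : volume A = ∫⁻ x in A, (W x) ^ ((1:ℝ)/2) * (W' x) ^ ((1:ℝ)/2) := by
      rw [← setLIntegral_one A]
      exact lintegral_congr fun x => hone x
    have hpq : Real.HolderConjugate 2 2 := Real.HolderConjugate.two_two
    have h2 := ENNReal.lintegral_mul_le_Lp_mul_Lq (volume.restrict A)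
      hpq (hWmeas.pow_const ((1:ℝ)/2)) (hW'meas.pow_const ((1:ℝ)/2))
    have h3 : ∀ (f : (Fin n → ℝ) → ℝ≥0∞) (x), ((f x) ^ ((1:ℝ)/2)) ^ (2:ℝ) = f x := by
      intro f x
      rw [← ENNReal.rpow_mul]
      norm_num
    rw [h1]
    calc ∫⁻ x in A, (W x) ^ ((1:ℝ)/2) * (W' x) ^ ((1:ℝ)/2)
        = ∫⁻ x in A, ((fun y => (W y) ^ ((1:ℝ)/2)) * (fun y => (W' y) ^ ((1:ℝ)/2))) x := by
          exact lintegral_congr fun x => rfl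
    _ ≤ (∫⁻ x in A, ((W x) ^ ((1:ℝ)/2)) ^ (2:ℝ)) ^ ((1:ℝ)/2) *
        (∫⁻ x in A, ((W' x) ^ ((1:ℝ)/2)) ^ (2:ℝ)) ^ ((1:ℝ)/2) := h2
    _ = (wm w A) ^ ((1:ℝ)/2) * (wm (fun x => (w x)⁻¹) A) ^ ((1:ℝ)/2) := by
        rw [wm_apply hAm, wm_apply hAm]
        congr 1
        · congr 1
          exact lintegral_congr fun x => h3 W x
        · congr 1
          exact lintegral_congr fun x => h3 W' x
  have hsq : (volume A) ^ 2 ≤ wm w A * wm (fun x => (w x)⁻¹) A := by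
    calc (volume A) ^ 2 ≤ ((wm w A) ^ ((1:ℝ)/2) * (wm (fun x => (w x)⁻¹) A) ^ ((1:ℝ)/2)) ^ 2 :=
      pow_le_pow_left₀ zero_le hCS 2
    _ = wm w A * wm (fun x => (w x)⁻¹) A := by
      rw [mul_pow]
      congr 1
      · rw [← ENNReal.rpow_natCast ((wm w A) ^ ((1:ℝ)/2)) 2, ← ENNReal.rpow_mul]
        norm_num
      · rw [← ENNReal.rpow_natCast ((wm (fun x => (w x)⁻¹) A) ^ ((1:ℝ)/2)) 2,
          ← ENNReal.rpow_mul]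
        norm_num
  calc (volume A) ^ 2 * wm w (cube n z r)
      ≤ (wm w A * wm (fun x => (w x)⁻¹) A) * wm w (cube n z r) :=
        mul_le_mul_left hsq _
  _ ≤ (wm w A * wm (fun x => (w x)⁻¹) (cube n z r)) * wm w (cube n z r) := by
        refine mul_le_mul_left (mul_le_mul_right (measure_mono hA) _) _
  _ = wm w A * (wm w (cube n z r) * wm (fun x => (w x)⁻¹) (cube n z r)) := by ring
  _ ≤ wm w A * (ENNReal.ofReal C * (volume (cube n z r)) ^ 2) :=
        mul_le_mul_right (hA2 z r hr) _
  _ = ENNReal.ofReal C * (volume (cube n z r)) ^ 2 * wm w A := by ring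

/-- Weak decay: a subset of at most half the measure of a cube carries at most
`1 - (4C)⁻¹` of the weight. -/
lemma wm_weak {n : ℕ} {w : (Fin n → ℝ) → ℝ} {C : ℝ} (hC : 1 ≤ C) (hpos : ∀ x, 0 < w x)
    (hw : LocallyIntegrable w) (hw' : LocallyIntegrable (fun x => (w x)⁻¹))
    (hA2 : ∀ z r, 0 < r → wm w (cube n z r) * wm (fun x => (w x)⁻¹) (cube n z r) ≤
      ENNReal.ofReal C * (volume (cube n z r)) ^ 2)
    (z : Fin n → ℝ) {r : ℝ} (hr : 0 < r) {F : Set (Fin n → ℝ)}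
    (hF : F ⊆ cube n z r) (hFm : MeasurableSet F)
    (hhalf : 2 * volume F ≤ volume (cube n z r)) :
    wm w F ≤ ENNReal.ofReal (1 - (4 * C)⁻¹) * wm w (cube n z r) := by
  set Q := cube n z r with hQ
  set A := Q \ F with hA
  have hQm : MeasurableSet Q := measurableSet_cube n z r
  have hAm : MeasurableSet A := hQm.diff hFm
  have hQfin : volume Q ≠ ∞ := volume_cube_ne_top n z r
  have hQpos : 0 < volume Q := volume_cube_pos n z hr
  have hwQfin : wm w Q ≠ ∞ := wm_cube_lt_top hpos hw z r
  have hvF : volume F ≠ ∞ := fun h => hQfin (eq_top_mono (measure_mono hF) h)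
  have hvA : volume Q / 2 ≤ volume A := by
    have h1 : volume A = volume Q - volume F :=
      measure_diff hF hFm.nullMeasurableSet hvF
    have h2 : volume F ≤ volume Q / 2 := by
      rw [ENNReal.le_div_iff_mul_le (Or.inl two_ne_zero) (Or.inl ENNReal.ofNat_ne_top)]
      rw [mul_comm]; exact hhalf
    rw [h1]
    calc volume Q / 2 = volume Q - volume Q / 2 := (ENNReal.sub_half hQfin).symm
    _ ≤ volume Q - volume F := tsub_le_tsub_left h2 _
  have hstar := wm_star hpos hw hw' hA2 z hr (Set.diff_subset) hAm
  -- volume Q ^2 /4 * wm Q ≤ C volQ^2 wm A hence wm Q ≤ 4C wm A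
  have h4 : (volume Q) ^ 2 * wm w Q ≤ ENNReal.ofReal (4 * C) * ((volume Q) ^ 2 * wm w A) := by
    have hq : (volume Q / 2) ^ 2 * wm w Q ≤ (volume A) ^ 2 * wm w Q :=
      mul_le_mul_left (pow_le_pow_left₀ zero_le hvA 2) _
    have hdiv : (volume Q / 2) ^ 2 = (volume Q) ^ 2 * 4⁻¹ := by
      rw [div_eq_mul_inv, mul_pow]
      congr 1
      rw [← ENNReal.inv_pow]
      norm_num
    have hofr : ENNReal.ofReal (4 * C) = 4 * ENNReal.ofReal C := by
      rw [ENNReal.ofReal_mul (by norm_num)]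
      norm_num
    calc (volume Q) ^ 2 * wm w Q = 4 * ((volume Q / 2) ^ 2 * wm w Q) := by
          rw [hdiv]
          rw [show (4:ℝ≥0∞) * ((volume Q)^2 * 4⁻¹ * wm w Q)
            = (4 * 4⁻¹) * ((volume Q)^2 * wm w Q) by ring]
          rw [ENNReal.mul_inv_cancel (by norm_num) (by norm_num), one_mul]
    _ ≤ 4 * ((volume A) ^ 2 * wm w Q) := mul_le_mul_right hq _
    _ ≤ 4 * (ENNReal.ofReal C * (volume Q) ^ 2 * wm w A) := mul_le_mul_right hstar _
    _ = ENNReal.ofReal (4 * C) * ((volume Q) ^ 2 * wm w A) := by rw [hofr]; ring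
  have hcancel : wm w Q ≤ ENNReal.ofReal (4 * C) * wm w A := by
    have hne0 : (volume Q) ^ 2 ≠ 0 := (ENNReal.pow_pos hQpos 2).ne'
    have hnetop : (volume Q) ^ 2 ≠ ∞ := ENNReal.pow_ne_top hQfin
    have := h4
    rw [show ENNReal.ofReal (4*C) * ((volume Q) ^ 2 * wm w A)
        = (volume Q) ^ 2 * (ENNReal.ofReal (4*C) * wm w A) by ring] at this
    exact (ENNReal.mul_le_mul_iff_right hne0 hnetop).mp this
  -- hence wm A ≥ (4C)⁻¹ wm Q
  have hAlow : ENNReal.ofReal ((4 * C)⁻¹) * wm w Q ≤ wm w A := by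
    have h4Cpos : (0:ℝ) < 4 * C := by linarith
    rw [ENNReal.ofReal_inv_of_pos h4Cpos]
    rw [← ENNReal.div_eq_inv_mul]
    rw [ENNReal.div_le_iff_le_mul (Or.inl (by
      simp [ENNReal.ofReal_eq_zero, not_le, h4Cpos]; linarith)) (Or.inl ENNReal.ofReal_ne_top)]
    rw [mul_comm]
    exact hcancel
  -- conclude
  have hsum : wm w F + wm w A = wm w Q := by
    rw [← measure_union (disjoint_sdiff_right) hAm, union_diff_cancel hF]
  have hwAfin : wm w A ≠ ∞ := by
    intro h
    apply hwQfin
    rw [← hsum, h, add_top]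
  have hFeq : wm w F = wm w Q - wm w A := ENNReal.eq_sub_of_add_eq hwAfin hsum
  rw [hFeq]
  have hC4 : (4 * C)⁻¹ ≤ 1 := by
    rw [inv_le_one_iff₀]
    right; linarith
  calc wm w Q - wm w A ≤ wm w Q - ENNReal.ofReal ((4 * C)⁻¹) * wm w Q :=
        tsub_le_tsub_left hAlow _
  _ = (1 - ENNReal.ofReal ((4 * C)⁻¹)) * wm w Q := by
        rw [ENNReal.sub_mul (fun _ _ => hwQfin), one_mul]
  _ = ENNReal.ofReal (1 - (4 * C)⁻¹) * wm w Q := by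
        congr 1
        rw [ENNReal.ofReal_sub 1 (by positivity), ENNReal.ofReal_one]

/-- The key decay estimate, by induction on scales via a Calderón–Zygmund
stopping-time argument on the dyadic grid. -/
lemma key {n : ℕ} {w : (Fin n → ℝ) → ℝ} {C : ℝ} (hC : 1 ≤ C) (hpos : ∀ x, 0 < w x)
    (hw : LocallyIntegrable w) (hw' : LocallyIntegrable (fun x => (w x)⁻¹))
    (hA2 : ∀ z r, 0 < r → wm w (cube n z r) * wm (fun x => (w x)⁻¹) (cube n z r) ≤
      ENNReal.ofReal C * (volume (cube n z r)) ^ 2) :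
    ∀ k : ℕ, ∀ z : Fin n → ℝ, ∀ r : ℝ, 0 < r → ∀ E : Set (Fin n → ℝ), E ⊆ cube n z r →
      MeasurableSet E → volume E * 2 ^ ((n+1) * k) ≤ volume (cube n z r) →
      wm w E ≤ (ENNReal.ofReal (1 - (4*C)⁻¹)) ^ k * wm w (cube n z r) := by
  intro k
  induction k with
  | zero =>
    intro z r hr E hE hEm _
    simpa using measure_mono hE
  | succ k IH =>
    intro z r hr E hE hEm hvol
    classical
    set K : ℝ≥0∞ := ENNReal.ofReal (1 - (4*C)⁻¹) with hK
    set Q : Set (Fin n → ℝ) := cube n z r with hQdef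
    by_cases hE0 : volume E = 0
    · have h0 : wm w E = 0 := withDensity_absolutelyContinuous volume _ hE0
      rw [h0]
      exact zero_le
    rcases Nat.eq_zero_or_pos n with hn | hn
    · -- `n = 0`: the hypothesis on the measure of `E` is contradictory
      exfalso
      subst hn
      obtain ⟨x, hx⟩ : E.Nonempty := nonempty_of_measure_ne_zero hE0
      have hEuniv : E = univ := by
        ext y
        simp only [mem_univ, iff_true]
        have : y = x := Subsingleton.elim y x
        rw [this]; exact hx
      have hQuniv : cube 0 z r = univ := by
        ext y
        simp only [cube, mem_setOf_eq, mem_univ, iff_true]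
        exact fun i => i.elim0
      have hvQ : volume (cube 0 z r) = 1 := by rw [volume_cube, pow_zero]
      have hvE : volume E = 1 := by rw [hEuniv, ← hQuniv, hvQ]
      rw [hvE, hvQ, one_mul] at hvol
      have hgt : (1:ℝ≥0∞) < 2 ^ ((0+1) * (k+1)) := by
        calc (1:ℝ≥0∞) < 2 := ENNReal.one_lt_two
        _ = 2 ^ 1 := (pow_one 2).symm
        _ ≤ 2 ^ ((0+1) * (k+1)) := pow_le_pow_right₀ one_le_two (by omega)
      exact absurd hvol (not_le.mpr hgt)
    -- main case `1 ≤ n`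
    set c : ℕ := n + (n+1) * k with hc
    set Heavy : ℕ × (Fin n → ℕ) → Prop := fun p =>
      Valid n p.1 p.2 ∧ volume (dc n z r p.1 p.2) < 2 ^ c * volume (E ∩ dc n z r p.1 p.2)
      with hHeavy
    set anc : ℕ → ℕ × (Fin n → ℕ) → ℕ × (Fin n → ℕ) :=
      fun j p => (j, fun i => p.2 i / 2 ^ (p.1 - j)) with hanc
    set T : Set (ℕ × (Fin n → ℕ)) := {p | Heavy p ∧ ∀ j < p.1, ¬ Heavy (anc j p)} with hT
    set Df : ℕ × (Fin n → ℕ) → Set (Fin n → ℝ) := fun p => dc n z r p.1 p.2 with hDf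
    set F : Set (Fin n → ℝ) := ⋃ p ∈ T, Df p with hF
    have hanc_eq : ∀ (p : ℕ × (Fin n → ℕ)) (j j' : ℕ), j ≤ j' → j' ≤ p.1 →
        anc j (anc j' p) = anc j p := by
      intro p j j' hjj hj'
      simp only [hanc]
      refine Prod.ext rfl ?_
      funext i
      simp only []
      rw [Nat.div_div_eq_div_mul, ← pow_add]
      congr 2
      omega
    have hanc_self : ∀ p : ℕ × (Fin n → ℕ), anc p.1 p = p := by
      intro p
      simp only [hanc]
      refine Prod.ext rfl ?_
      funext i
      simp [Nat.sub_self]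
    have hDf_anc : ∀ (p : ℕ × (Fin n → ℕ)) (j : ℕ), j ≤ p.1 → Df p ⊆ Df (anc j p) := by
      intro p j hj
      have h := dc_anc (n := n) (z := z) (r := r) hr j (p.1 - j) p.2
      rw [Nat.add_sub_cancel' hj] at h
      exact h
    have hanc_valid : ∀ (p : ℕ × (Fin n → ℕ)) (j : ℕ), j ≤ p.1 → Valid n p.1 p.2 →
        Valid n j (anc j p).2 := by
      intro p j hj hv
      exact valid_anc (n := n) (j := j) (d := p.1 - j) (m := p.2)
        (by rw [Nat.add_sub_cancel' hj]; exact hv)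
    have hstop : ∀ p : ℕ × (Fin n → ℕ), Heavy p → ∃ q, q ∈ T ∧ Df p ⊆ Df q := by
      intro p hp
      have hex : ∃ j, j ≤ p.1 ∧ Heavy (anc j p) :=
        ⟨p.1, le_rfl, by rw [hanc_self]; exact hp⟩
      obtain ⟨hj0le, hj0h⟩ := Nat.find_spec hex
      refine ⟨anc (Nat.find hex) p, ⟨hj0h, ?_⟩, hDf_anc p (Nat.find hex) hj0le⟩
      intro j hj hcon
      rw [hanc_eq p j (Nat.find hex) (le_of_lt hj) hj0le] at hcon
      exact Nat.find_min hex hj ⟨le_trans (le_of_lt hj) hj0le, hcon⟩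
    have hdisj : T.PairwiseDisjoint Df := by
      intro p hp q hq hpq
      rw [Function.onFun, Set.disjoint_left]
      intro x hxp hxq
      have main : ∀ p q : ℕ × (Fin n → ℕ), p ∈ T → q ∈ T → p.1 ≤ q.1 →
          x ∈ Df p → x ∈ Df q → p = q := by
        intro p q hp hq hle hxp hxq
        have hxq' : x ∈ Df (anc p.1 q) := hDf_anc q p.1 hle hxq
        have heq2 : (anc p.1 q).2 = p.2 := dc_eq_of_mem hr hxq' hxp
        rcases eq_or_lt_of_le hle with heq1 | hlt
        · have h1 : anc p.1 q = q := by rw [heq1]; exact hanc_self q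
          rw [← h1]
          exact (Prod.ext_iff.mpr ⟨rfl, heq2⟩ : anc p.1 q = p).symm
        · exfalso
          have h1 : anc p.1 q = p := Prod.ext_iff.mpr ⟨rfl, heq2⟩
          exact hq.2 p.1 hlt (h1 ▸ hp.1)
      rcases le_total p.1 q.1 with h | h
      · exact hpq (main p q hp hq h hxp hxq)
      · exact hpq ((main q p hq hp h hxq hxp).symm)
    have hDfm : ∀ p : ℕ × (Fin n → ℕ), MeasurableSet (Df p) :=
      fun p => measurableSet_dc n z r p.1 p.2
    have hDfQ : ∀ p ∈ T, Df p ⊆ Q := fun p hp => dc_subset_root hr hp.1.1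
    have hFm : MeasurableSet F := MeasurableSet.biUnion T.to_countable fun p _ => hDfm p
    have hFQ : F ⊆ Q := iUnion₂_subset hDfQ
    have hdisj' : T.PairwiseDisjoint (fun p => E ∩ Df p) :=
      hdisj.mono_on fun p _ => inter_subset_right
    have hvolF : volume F = ∑' p : T, volume (Df p) :=
      measure_biUnion T.to_countable hdisj fun p _ => hDfm p
    have hinterF : E ∩ F = ⋃ p ∈ T, (E ∩ Df p) := by
      rw [hF, inter_iUnion₂]
    have hvolEF : volume (E ∩ F) = ∑' p : T, volume (E ∩ Df p) := by
      rw [hinterF]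
      exact measure_biUnion T.to_countable hdisj' fun p _ => hEm.inter (hDfm p)
    have hcexp : (n+1) * (k+1) = c + 1 := by rw [hc]; ring
    have hhalf : 2 * volume F ≤ volume Q := by
      have h1 : ∀ p : T, volume (Df p) ≤ 2 ^ c * volume (E ∩ Df p) :=
        fun p => le_of_lt p.2.1.2
      have h2 : volume F ≤ 2 ^ c * volume (E ∩ F) := by
        rw [hvolF, hvolEF, ← ENNReal.tsum_mul_left]
        exact ENNReal.tsum_le_tsum h1
      calc 2 * volume F ≤ 2 * (2 ^ c * volume (E ∩ F)) := mul_le_mul_right h2 _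
      _ ≤ 2 * (2 ^ c * volume E) :=
          mul_le_mul_right (mul_le_mul_right (measure_mono inter_subset_left) _) _
      _ = volume E * 2 ^ (c + 1) := by rw [← mul_assoc, ← pow_succ']; ring
      _ = volume E * 2 ^ ((n+1) * (k+1)) := by rw [hcexp]
      _ ≤ volume Q := hvol
    have hweakF : wm w F ≤ K * wm w Q :=
      wm_weak hC hpos hw hw' hA2 z hr hFQ hFm hhalf
    -- the per-cube estimate via the inductive hypothesis
    have hper : ∀ p ∈ T, wm w (E ∩ Df p) ≤ K ^ k * wm w (Df p) := by
      rintro ⟨j, m⟩ hp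
      obtain ⟨⟨hval, hheavy⟩, hmin⟩ := hp
      rcases Nat.eq_zero_or_pos j with h0 | h0
      · exfalso
        subst h0
        have hm0 : m = fun _ => 0 := funext fun i => by have := hval i; simpa using this
        have hDfp : dc n z r 0 m = Q := by rw [hm0, dc_zero]
        rw [hDfp] at hheavy
        have hEQ : E ∩ Q = E := inter_eq_left.mpr hE
        rw [hEQ] at hheavy
        have : volume Q < volume Q := by
          calc volume Q < 2 ^ c * volume E := hheavy
          _ ≤ 2 ^ ((n+1)*(k+1)) * volume E := by
              refine mul_le_mul_left (pow_le_pow_right₀ one_le_two ?_) _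
              omega
          _ = volume E * 2 ^ ((n+1)*(k+1)) := mul_comm _ _
          _ ≤ volume Q := hvol
        exact lt_irrefl _ this
      · -- parent is light
        have hj1 : j - 1 < j := by omega
        have hlight := hmin (j-1) hj1
        set pp := anc (j-1) (j, m) with hpp
        have hppvalid : Valid n (j-1) pp.2 := hanc_valid (j, m) (j-1) (by omega) hval
        have hpplight : 2 ^ c * volume (E ∩ Df pp) ≤ volume (Df pp) := by
          by_contra hcon
          exact hlight ⟨hppvalid, not_le.mp hcon⟩
        have hsubpp : Df (j, m) ⊆ Df pp := hDf_anc (j, m) (j-1) (by omega)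
        have hvolpp : volume (Df pp) = 2 ^ n * volume (Df (j, m)) := by
          have h := volume_dc_succ z hr (j-1) pp.2 m
          rw [show (j-1)+1 = j by omega] at h
          exact h
        -- volume (E ∩ Df p) * 2^((n+1)k) ≤ volume (Df p)
        have hIHbound : volume (E ∩ Df (j, m)) * 2 ^ ((n+1) * k) ≤ volume (Df (j, m)) := by
          have h1 : 2 ^ c * volume (E ∩ Df (j, m)) ≤ 2 ^ n * volume (Df (j, m)) := by
            calc 2 ^ c * volume (E ∩ Df (j, m)) ≤ 2 ^ c * volume (E ∩ Df pp) :=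
              mul_le_mul_right (measure_mono (inter_subset_inter_right E hsubpp)) _
            _ ≤ volume (Df pp) := hpplight
            _ = 2 ^ n * volume (Df (j, m)) := hvolpp
          have h2 : (2:ℝ≥0∞) ^ c = 2 ^ n * 2 ^ ((n+1) * k) := by rw [hc, pow_add]
          rw [h2, mul_assoc] at h1
          have h3 := (ENNReal.mul_le_mul_iff_right (a := (2:ℝ≥0∞)^n)
            (by positivity) (by exact ENNReal.pow_ne_top ENNReal.ofNat_ne_top)).mp h1
          rw [mul_comm] at h3
          exact h3
        have := IH (fun i => z i - r + (2 * (m i : ℝ) + 1) * (r / 2 ^ j)) (r / 2 ^ j)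
          (by positivity) (E ∩ Df (j, m)) inter_subset_right (hEm.inter (hDfm (j, m)))
          hIHbound
        exact this
    -- the null part : almost every point of E lies in F
    have hnull : volume (E \ F) = 0 := by
      set E' : Set (Fin n → ℝ) := (E \ bad n z r) \ F with hE'def
      have hE'm : MeasurableSet E' := (hEm.diff (measurableSet_bad n z r)).diff hFm
      have hsub : E \ F ⊆ E' ∪ bad n z r := by
        intro x hx
        by_cases hb : x ∈ bad n z r
        · exact Or.inr hb
        · exact Or.inl ⟨⟨hx.1, hb⟩, hx.2⟩
      have hE'E : E' ⊆ E := fun x hx => hx.1.1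
      have hE'fin : volume E' ≠ ∞ := fun h =>
        volume_cube_ne_top n z r (eq_top_mono (measure_mono (hE'E.trans hE)) h)
      have hlightE' : ∀ j m, Valid n j m → (dc n z r j m ∩ E').Nonempty →
          2 ^ c * volume (E ∩ dc n z r j m) ≤ volume (dc n z r j m) := by
        rintro j m hv ⟨x, hxd, hxE'⟩
        by_contra hcon
        obtain ⟨q, hq, hsubq⟩ := hstop (j, m) ⟨hv, not_le.mp hcon⟩
        exact hxE'.2 (mem_biUnion hq (hsubq hxd))
      have hmain : ∀ ε : ℝ≥0, 0 < ε →
          volume E' ≤ ((2:ℝ≥0∞) ^ c)⁻¹ * (volume E' + ε) := by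
        intro ε hε
        obtain ⟨U, hUsup, hUopen, hUlt⟩ := Set.exists_isOpen_lt_of_lt E' _
          (ENNReal.lt_add_right hE'fin (ENNReal.coe_ne_zero.mpr hε.ne'))
        set G : ℕ → Set (Fin n → ℝ) := fun j => ⋃ (m : Fin n → ℕ)
          (_ : Valid n j m ∧ dc n z r j m ⊆ U), (E' ∩ dc n z r j m) with hG
        have hGmono : Monotone G := by
          refine monotone_nat_of_le_succ fun j x hx => ?_
          rw [hG, mem_iUnion] at hx
          obtain ⟨m, hm⟩ := hx
          rw [mem_iUnion] at hm
          obtain ⟨⟨hval, hUsub⟩, hxm⟩ := hm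
          have hxE : x ∈ E := hE'E hxm.1
          have hxbad : x ∉ bad n z r := hxm.1.1.2
          have hmk := mem_dc_mk hr (hE hxE) hxbad (j+1)
          have hnest := dc_nest (n := n) (z := z) (r := r) hr
            (j := j) (m := mk n z r (j+1) x)
          have hxj : x ∈ dc n z r j (fun i => mk n z r (j+1) x i / 2) := hnest hmk.1
          have heqm : (fun i => mk n z r (j+1) x i / 2) = m :=
            dc_eq_of_mem hr hxj hxm.2
          rw [hG, mem_iUnion]
          refine ⟨mk n z r (j+1) x, ?_⟩
          rw [mem_iUnion]
          exact ⟨⟨hmk.2, (heqm ▸ hnest : dc n z r (j+1) (mk n z r (j+1) x) ⊆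
            dc n z r j m).trans hUsub⟩, hxm.1, hmk.1⟩
        have hGcup : ⋃ j, G j = E' := by
          apply Set.eq_of_subset_of_subset
          · refine iUnion_subset fun j => ?_
            rw [hG]
            exact iUnion₂_subset fun m _ => inter_subset_left
          · intro x hx
            have hxU : x ∈ U := hUsup hx
            obtain ⟨j, hj⟩ := exists_dc_subset_open hr (hE (hE'E hx)) hx.1.2 hUopen hxU
            have hmk := mem_dc_mk hr (hE (hE'E hx)) hx.1.2 j
            rw [mem_iUnion]
            refine ⟨j, ?_⟩
            rw [hG, mem_iUnion]
            refine ⟨mk n z r j x, ?_⟩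
            rw [mem_iUnion]
            exact ⟨⟨hmk.2, hj⟩, hx, hmk.1⟩
        have hGbound : ∀ j, volume (G j) ≤ ((2:ℝ≥0∞) ^ c)⁻¹ * volume U := by
          intro j
          set S : Set (Fin n → ℕ) :=
            {m | Valid n j m ∧ dc n z r j m ⊆ U ∧ (dc n z r j m ∩ E').Nonempty} with hS
          have hGsub : G j ⊆ ⋃ m ∈ S, (E ∩ dc n z r j m) := by
            rw [hG]
            refine iUnion₂_subset fun m hm => ?_
            intro x hx
            refine mem_biUnion ⟨hm.1, hm.2, ⟨x, hx.2, hx.1⟩⟩ ⟨hE'E hx.1, hx.2⟩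
          have hSdisj : S.PairwiseDisjoint (fun m => dc n z r j m) := by
            intro m hm m' hm' hne
            rw [Function.onFun, Set.disjoint_left]
            intro x hx hx'
            exact hne (dc_eq_of_mem hr hx hx')
          calc volume (G j) ≤ ∑' m : S, volume (E ∩ dc n z r j m) :=
            (measure_mono hGsub).trans (measure_biUnion_le volume S.to_countable _)
          _ ≤ ∑' m : S, ((2:ℝ≥0∞) ^ c)⁻¹ * volume (dc n z r j m) := by
              refine ENNReal.tsum_le_tsum fun ⟨m, hm⟩ => ?_
              have h1 := hlightE' j m hm.1 hm.2.2
              have h2 : ((2:ℝ≥0∞) ^ c)⁻¹ * (2 ^ c * volume (E ∩ dc n z r j m)) ≤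
                  ((2:ℝ≥0∞) ^ c)⁻¹ * volume (dc n z r j m) := mul_le_mul_right h1 _
              rw [← mul_assoc, ENNReal.inv_mul_cancel (by positivity)
                (ENNReal.pow_ne_top ENNReal.ofNat_ne_top), one_mul] at h2
              exact h2
          _ = ((2:ℝ≥0∞) ^ c)⁻¹ * ∑' m : S, volume (dc n z r j m) :=
              ENNReal.tsum_mul_left
          _ ≤ ((2:ℝ≥0∞) ^ c)⁻¹ * volume U := by
              refine mul_le_mul_right ?_ _
              have heq : ∑' m : S, volume (dc n z r j m) =
                  volume (⋃ m ∈ S, dc n z r j m) :=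
                (measure_biUnion S.to_countable hSdisj fun m _ =>
                  measurableSet_dc n z r j m).symm
              rw [heq]
              exact measure_mono (iUnion₂_subset fun m hm => hm.2.1)
        have h1 : volume E' ≤ ((2:ℝ≥0∞) ^ c)⁻¹ * volume U := by
          rw [← hGcup, hGmono.directed_le.measure_iUnion]
          exact iSup_le hGbound
        exact h1.trans (mul_le_mul_right (le_of_lt hUlt) _)
      have hfinal : volume E' ≤ ((2:ℝ≥0∞) ^ c)⁻¹ * volume E' := by
        refine ENNReal.le_of_forall_pos_le_add fun ε hε hb => ?_
        calc volume E' ≤ ((2:ℝ≥0∞) ^ c)⁻¹ * (volume E' + ε) := hmain ε hε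
        _ = ((2:ℝ≥0∞) ^ c)⁻¹ * volume E' + ((2:ℝ≥0∞) ^ c)⁻¹ * ε := by rw [mul_add]
        _ ≤ ((2:ℝ≥0∞) ^ c)⁻¹ * volume E' + 1 * ε := by
            refine add_le_add_right (mul_le_mul_left ?_ _) _
            exact ENNReal.inv_le_one.mpr (one_le_pow_of_one_le' one_le_two c)
        _ = ((2:ℝ≥0∞) ^ c)⁻¹ * volume E' + ε := by rw [one_mul]
      have hθ : ((2:ℝ≥0∞) ^ c)⁻¹ < 1 := by
        rw [ENNReal.inv_lt_one]
        calc (1:ℝ≥0∞) < 2 := ENNReal.one_lt_two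
        _ = 2 ^ 1 := (pow_one 2).symm
        _ ≤ 2 ^ c := pow_le_pow_right₀ one_le_two (by rw [hc]; omega)
      have hE'0 : volume E' = 0 := by
        by_contra h0'
        have hlt : ((2:ℝ≥0∞) ^ c)⁻¹ * volume E' < 1 * volume E' :=
          (ENNReal.mul_lt_mul_iff_left h0' hE'fin).mpr hθ
        rw [one_mul] at hlt
        exact absurd hfinal (not_le.mpr hlt)
      exact measure_mono_null hsub (measure_union_null hE'0 (volume_bad n z r))
    -- put the pieces together
    have hwmnull : wm w (E \ F) = 0 := withDensity_absolutelyContinuous volume _ hnull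
    have hEmF : wm w (E ∩ F) = ∑' p : T, wm w (E ∩ Df p) := by
      rw [hinterF]
      exact measure_biUnion T.to_countable hdisj' fun p _ => hEm.inter (hDfm p)
    have hwmF : wm w F = ∑' p : T, wm w (Df p) :=
      measure_biUnion T.to_countable hdisj fun p _ => hDfm p
    calc wm w E = wm w (E ∩ F) + wm w (E \ F) := (measure_inter_add_diff E hFm).symm
    _ = ∑' p : T, wm w (E ∩ Df p) := by rw [hwmnull, add_zero, hEmF]
    _ ≤ ∑' p : T, K ^ k * wm w (Df p) :=
        ENNReal.tsum_le_tsum fun p => hper p.1 p.2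
    _ = K ^ k * ∑' p : T, wm w (Df p) := ENNReal.tsum_mul_left
    _ = K ^ k * wm w F := by rw [hwmF]
    _ ≤ K ^ k * (K * wm w Q) := mul_le_mul_right hweakF _
    _ = K ^ (k+1) * wm w Q := by rw [← mul_assoc, ← pow_succ]

lemma integral_eq_wm_toReal {n : ℕ} {w : (Fin n → ℝ) → ℝ} (hpos : ∀ x, 0 < w x)
    {s : Set (Fin n → ℝ)} (hs : MeasurableSet s) (hi : IntegrableOn w s) :
    ∫ x in s, w x = (wm w s).toReal := by
  rw [wm_eq_ofReal_integral hpos hs hi,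
    ENNReal.toReal_ofReal (setIntegral_nonneg hs fun x _ => (hpos x).le)]

end A2proof

open A2proof in
set_option maxHeartbeats 1000000 in
/-- If `w ∈ A₂(ℝⁿ)`, there exist `η ∈ (0,1)` and `β > 0`, depending only on `n`
and `[w]_{A₂}`, such that `β⁻¹ (|E|/|Q|)^{1/(2η)} ≤ w(E)/w(Q) ≤ β (|E|/|Q|)^{2η}`
for every cube `Q` and every measurable `E ⊆ Q`. Here `|⬝|` is Lebesgue measure
and `w(E) = ∫_E w dx`. -/
theorem stmt2 (n : ℕ) (C : ℝ) (hC : 0 < C) :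
    ∃ η ∈ Set.Ioo (0 : ℝ) 1, ∃ β > (0 : ℝ),
      ∀ w : (Fin n → ℝ) → ℝ, IsA2 n w C →
        ∀ z r, 0 < r → ∀ E ⊆ cube n z r, MeasurableSet E →
          β⁻¹ * ((volume E).toReal / (volume (cube n z r)).toReal) ^ (1 / (2 * η)) ≤
              (∫ x in E, w x) / (∫ x in cube n z r, w x) ∧
            (∫ x in E, w x) / (∫ x in cube n z r, w x) ≤
              β * ((volume E).toReal / (volume (cube n z r)).toReal) ^ (2 * η) := by
  classical
  set C' : ℝ := max C 1 with hC'def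
  have hC'1 : (1:ℝ) ≤ C' := le_max_right _ _
  have hC'pos : (0:ℝ) < C' := lt_of_lt_of_le one_pos hC'1
  set δ : ℝ := (4 * C')⁻¹ with hδdef
  have hδpos : 0 < δ := by positivity
  have hδ14 : δ ≤ 1/4 := by
    rw [hδdef]
    rw [inv_le_comm₀ (by nlinarith) (by norm_num)]
    nlinarith
  have h1δ : 0 < 1 - δ := by linarith
  have h1δlt : 1 - δ < 1 := by linarith
  have hlog2 : 0 < Real.log 2 := Real.log_pos one_lt_two
  have hnum : 0 < Real.log (1/(1-δ)) := by
    apply Real.log_pos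
    rw [lt_div_iff₀ h1δ]
    linarith
  set ε : ℝ := Real.log (1/(1-δ)) / ((n+1) * Real.log 2) with hεdef
  have hεpos : 0 < ε := div_pos hnum (by positivity)
  have hεhalf : ε ≤ 1/2 := by
    have hle43 : 1/(1-δ) ≤ 4/3 := by
      rw [div_le_div_iff₀ h1δ (by norm_num)]
      linarith
    have hlog43 : Real.log (1/(1-δ)) ≤ Real.log (4/3) :=
      Real.log_le_log (by positivity) hle43
    have h2 : Real.log (4/3) * 2 ≤ Real.log 2 := by
      have h3 := Real.log_le_log (by norm_num : (0:ℝ) < (4/3)^2)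
        (by norm_num : ((4:ℝ)/3)^2 ≤ 2)
      rw [Real.log_pow] at h3
      push_cast at h3
      linarith
    have hden : (1:ℝ) * Real.log 2 ≤ (n+1) * Real.log 2 := by
      refine mul_le_mul_of_nonneg_right ?_ hlog2.le
      have : (0:ℝ) ≤ n := Nat.cast_nonneg n
      linarith
    rw [hεdef, div_le_iff₀ (by positivity)]
    calc Real.log (1/(1-δ)) ≤ Real.log (4/3) := hlog43
    _ ≤ Real.log 2 / 2 := by linarith
    _ ≤ 1/2 * ((n+1) * Real.log 2) := by
        rw [one_mul] at hden
        nlinarith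
  set η : ℝ := ε / 2 with hηdef
  have hη : η ∈ Set.Ioo (0:ℝ) 1 := by
    constructor
    · positivity
    · rw [hηdef]; linarith
  set β : ℝ := max ((1-δ)⁻¹) C' with hβdef
  have hβC' : C' ≤ β := le_max_right _ _
  have hβδ : (1-δ)⁻¹ ≤ β := le_max_left _ _
  have hβpos : 0 < β := lt_of_lt_of_le hC'pos hβC'
  have h2η : 2 * η = ε := by rw [hηdef]; ring
  refine ⟨η, hη, β, hβpos, ?_⟩
  intro w hA2w z r hr E hEQ hEm
  obtain ⟨hpos, hw, hw', hA2⟩ := hA2w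
  set Q : Set (Fin n → ℝ) := cube n z r with hQdef
  have hQm : MeasurableSet Q := measurableSet_cube n z r
  have hQfin : volume Q ≠ ∞ := volume_cube_ne_top n z r
  have hQvpos : 0 < volume Q := volume_cube_pos n z hr
  -- A2 condition with constant C' in ENNReal form
  have hA2' : ∀ z' r', 0 < r' →
      wm w (cube n z' r') * wm (fun x => (w x)⁻¹) (cube n z' r') ≤
        ENNReal.ofReal C' * (volume (cube n z' r')) ^ 2 := by
    intro z' r' hr'
    have hi := integrableOn_cube hw z' r'
    have hi' := integrableOn_cube hw' z' r'
    have hposInv : ∀ x, 0 < (w x)⁻¹ := fun x => inv_pos.mpr (hpos x)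
    rw [wm_eq_ofReal_integral hpos (measurableSet_cube n z' r') hi,
      wm_eq_ofReal_integral hposInv (measurableSet_cube n z' r') hi',
      ← ENNReal.ofReal_mul (setIntegral_nonneg (measurableSet_cube n z' r')
        fun x _ => (hpos x).le)]
    have hle2 : (∫ x in cube n z' r', w x) * (∫ x in cube n z' r', (w x)⁻¹) ≤
        C' * ((volume (cube n z' r')).toReal) ^ 2 := by
      refine le_trans (hA2 z' r' hr') ?_
      exact mul_le_mul_of_nonneg_right (le_max_left C 1) (sq_nonneg _)
    calc ENNReal.ofReal ((∫ x in cube n z' r', w x) * ∫ x in cube n z' r', (w x)⁻¹)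
        ≤ ENNReal.ofReal (C' * ((volume (cube n z' r')).toReal) ^ 2) :=
          ENNReal.ofReal_le_ofReal hle2
    _ = ENNReal.ofReal C' * (volume (cube n z' r')) ^ 2 := by
        rw [ENNReal.ofReal_mul hC'pos.le, ENNReal.ofReal_pow ENNReal.toReal_nonneg,
          ENNReal.ofReal_toReal (volume_cube_ne_top n z' r')]
  -- basic facts
  have hiQ : IntegrableOn w Q := integrableOn_cube hw z r
  have hiE : IntegrableOn w E := hiQ.mono_set hEQ
  have hwQ_eq : ∫ x in Q, w x = (wm w Q).toReal := integral_eq_wm_toReal hpos hQm hiQ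
  have hwE_eq : ∫ x in E, w x = (wm w E).toReal := integral_eq_wm_toReal hpos hEm hiE
  have hwmQfin : wm w Q ≠ ∞ := wm_cube_lt_top hpos hw z r
  have hwmQpos : 0 < wm w Q := wm_cube_pos hpos hw z hr
  have hwmEfin : wm w E ≠ ∞ := fun h => hwmQfin (eq_top_mono (measure_mono hEQ) h)
  have hwQpos : 0 < ∫ x in Q, w x := by
    rw [hwQ_eq]
    exact ENNReal.toReal_pos hwmQpos.ne' hwmQfin
  have hwEnn : 0 ≤ ∫ x in E, w x := setIntegral_nonneg hEm fun x _ => (hpos x).le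
  by_cases hE0 : volume E = 0
  · -- trivial case
    have hwmE : wm w E = 0 := withDensity_absolutelyContinuous volume _ hE0
    have hwE0 : ∫ x in E, w x = 0 := by rw [hwE_eq, hwmE, ENNReal.toReal_zero]
    have ht0 : (volume E).toReal = 0 := by rw [hE0]; rfl
    rw [hwE0, ht0, zero_div, zero_div]
    constructor
    · rw [Real.zero_rpow (by positivity : 1 / (2 * η) ≠ 0), mul_zero]
    · rw [Real.zero_rpow (by positivity : 2 * η ≠ 0), mul_zero]
  -- main case
  set t : ℝ := (volume E).toReal / (volume Q).toReal with htdef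
  have hEfin : volume E ≠ ∞ := fun h => hQfin (eq_top_mono (measure_mono hEQ) h)
  have hQtr : 0 < (volume Q).toReal := ENNReal.toReal_pos hQvpos.ne' hQfin
  have htpos : 0 < t := div_pos (ENNReal.toReal_pos hE0 hEfin) hQtr
  have ht1 : t ≤ 1 := by
    rw [htdef, div_le_one hQtr]
    exact ENNReal.toReal_mono hQfin (measure_mono hEQ)
  set α : ℝ := ((2:ℝ) ^ (n+1))⁻¹ with hαdef
  have hαpos : 0 < α := by positivity
  have hα1 : α < 1 := by
    rw [hαdef, inv_lt_one_iff₀]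
    right
    exact one_lt_pow₀ one_lt_two (by omega)
  have hex : ∃ k : ℕ, α ^ (k+1) < t := by
    obtain ⟨j, hj⟩ := exists_pow_lt_of_lt_one htpos hα1
    exact ⟨j, lt_of_le_of_lt (pow_le_pow_of_le_one hαpos.le hα1.le (by omega)) hj⟩
  set k0 : ℕ := Nat.find hex with hk0def
  have hk1 : α ^ (k0+1) < t := Nat.find_spec hex
  have hk2 : t ≤ α ^ k0 := by
    rcases Nat.eq_zero_or_pos k0 with h0 | h0
    · rw [h0, pow_zero]; exact ht1
    · have hmin := Nat.find_min hex (m := k0 - 1) (by omega)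
      rw [show k0 - 1 + 1 = k0 by omega] at hmin
      exact not_lt.mp hmin
  -- apply the key estimate
  have hkey_hyp : volume E * 2 ^ ((n+1) * k0) ≤ volume Q := by
    have hreal : (volume E).toReal * 2 ^ ((n+1) * k0) ≤ (volume Q).toReal := by
      have ht' : (volume E).toReal ≤ α ^ k0 * (volume Q).toReal := by
        rw [htdef, div_le_iff₀ hQtr] at hk2
        exact hk2
      have hαk : α ^ k0 * 2 ^ ((n+1)*k0) = 1 := by
        rw [hαdef, pow_mul, inv_pow]
        exact inv_mul_cancel₀ (a := ((2:ℝ)^(n+1))^k0) (by positivity)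
      have hp2 : (0:ℝ) < 2 ^ ((n+1)*k0) := by positivity
      calc (volume E).toReal * 2 ^ ((n+1) * k0)
          ≤ (α ^ k0 * (volume Q).toReal) * 2 ^ ((n+1)*k0) :=
            mul_le_mul_of_nonneg_right ht' hp2.le
      _ = (α ^ k0 * 2 ^ ((n+1)*k0)) * (volume Q).toReal := by ring
      _ = (volume Q).toReal := by rw [hαk, one_mul]
    calc volume E * 2 ^ ((n+1) * k0)
        = ENNReal.ofReal ((volume E).toReal * 2 ^ ((n+1) * k0)) := by
          rw [ENNReal.ofReal_mul ENNReal.toReal_nonneg, ENNReal.ofReal_toReal hEfin]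
          congr 1
          rw [← ENNReal.ofReal_ofNat 2, ← ENNReal.ofReal_pow (by norm_num)]
    _ ≤ ENNReal.ofReal ((volume Q).toReal) := ENNReal.ofReal_le_ofReal hreal
    _ = volume Q := ENNReal.ofReal_toReal hQfin
  have hkey := key hC'1 hpos hw hw' hA2' k0 z r hr E hEQ hEm hkey_hyp
  have hwmE_le : (wm w E).toReal ≤ (1-δ)^k0 * (wm w Q).toReal := by
    have h1 : (wm w E).toReal ≤ ((ENNReal.ofReal (1 - (4*C')⁻¹))^k0 * wm w Q).toReal :=
      ENNReal.toReal_mono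
        (ENNReal.mul_ne_top (ENNReal.pow_ne_top ENNReal.ofReal_ne_top) hwmQfin) hkey
    rw [ENNReal.toReal_mul, ENNReal.toReal_pow, ENNReal.toReal_ofReal (by linarith)] at h1
    exact h1
  -- relation α ^ ε = 1 - δ
  have hαε : α ^ ε = 1 - δ := by
    rw [Real.rpow_def_of_pos hαpos]
    have hlogα : Real.log α = -((n+1) * Real.log 2) := by
      rw [hαdef, Real.log_inv, Real.log_pow]
      push_cast
      ring
    rw [hlogα, hεdef]
    have hd : ((n:ℝ)+1) * Real.log 2 ≠ 0 := by positivity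
    have hcalc : (((n:ℝ)+1) * Real.log 2) * (Real.log (1/(1-δ)) / (((n:ℝ)+1) * Real.log 2))
        = Real.log (1/(1-δ)) := by
      rw [mul_div_assoc']
      exact mul_div_cancel_left₀ _ hd
    rw [neg_mul, hcalc, one_div, Real.log_inv, neg_neg, Real.exp_log h1δ]
  have hδk : (1-δ)^k0 ≤ (1-δ)⁻¹ * t ^ ε := by
    have e1 : ((1:ℝ)-δ)^k0 = α ^ (ε * k0) := by
      rw [Real.rpow_mul hαpos.le, hαε, ← Real.rpow_natCast ((1:ℝ)-δ) k0,
        Real.rpow_natCast]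
    have e2 : α ^ (ε * (k0:ℝ)) = α ^ (ε * ((k0:ℝ)+1)) * α ^ (-ε) := by
      rw [← Real.rpow_add hαpos]
      congr 1
      ring
    have e3 : α ^ (ε * ((k0:ℝ)+1)) = (α ^ (k0+1 : ℕ)) ^ ε := by
      rw [← Real.rpow_natCast α (k0+1), ← Real.rpow_mul hαpos.le]
      congr 1
      push_cast
      ring
    have e4 : (α ^ (k0+1 : ℕ)) ^ ε ≤ t ^ ε :=
      Real.rpow_le_rpow (by positivity) hk1.le hεpos.le
    have e5 : α ^ (-ε) = (1-δ)⁻¹ := by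
      rw [Real.rpow_neg hαpos.le, hαε]
    calc ((1:ℝ)-δ)^k0 = α ^ (ε * (k0:ℝ)) := e1
    _ = α ^ (ε * ((k0:ℝ)+1)) * α ^ (-ε) := e2
    _ = (α ^ (k0+1 : ℕ)) ^ ε * (1-δ)⁻¹ := by rw [e3, e5]
    _ ≤ t ^ ε * (1-δ)⁻¹ := mul_le_mul_of_nonneg_right e4 (by positivity)
    _ = (1-δ)⁻¹ * t ^ ε := mul_comm _ _
  constructor
  · -- lower bound
    rw [h2η]
    have h2ε : (2:ℝ) ≤ 1/ε := by
      rw [le_div_iff₀ hεpos]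
      linarith
    have hrp : t ^ (1/ε) ≤ t ^ (2:ℝ) :=
      Real.rpow_le_rpow_of_exponent_ge htpos ht1 h2ε
    have hstar := wm_star hpos hw hw' hA2' z hr hEQ hEm
    have hreal2 : ((volume E).toReal)^2 * (∫ x in Q, w x) ≤
        C' * ((volume Q).toReal)^2 * (∫ x in E, w x) := by
      have h1 := ENNReal.toReal_mono
        (ENNReal.mul_ne_top (ENNReal.mul_ne_top ENNReal.ofReal_ne_top
          (ENNReal.pow_ne_top hQfin)) hwmEfin) hstar
      rw [ENNReal.toReal_mul, ENNReal.toReal_mul, ENNReal.toReal_mul,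
        ENNReal.toReal_pow, ENNReal.toReal_pow,
        ENNReal.toReal_ofReal hC'pos.le] at h1
      rw [hwQ_eq, hwE_eq]
      exact h1
    have ht2 : t ^ (2:ℝ) = ((volume E).toReal)^2 / ((volume Q).toReal)^2 := by
      rw [show (2:ℝ) = ((2:ℕ):ℝ) by norm_num, Real.rpow_natCast, htdef, div_pow]
    calc β⁻¹ * t ^ (1/ε) ≤ C'⁻¹ * t ^ (2:ℝ) := by
          refine mul_le_mul ?_ hrp (by positivity) (by positivity)
          exact inv_anti₀ hC'pos hβC'
    _ ≤ (∫ x in E, w x) / (∫ x in Q, w x) := by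
          rw [ht2]
          have hb2 : (0:ℝ) < ((volume Q).toReal)^2 := by positivity
          rw [show C'⁻¹ * (((volume E).toReal)^2 / ((volume Q).toReal)^2)
              = ((volume E).toReal)^2 / (C' * ((volume Q).toReal)^2) by
                field_simp]
          rw [div_le_div_iff₀ (by positivity) hwQpos]
          linarith [hreal2]
  · -- upper bound
    rw [h2η]
    have hdiv : (∫ x in E, w x) / (∫ x in Q, w x) ≤ (1-δ)^k0 := by
      rw [div_le_iff₀ hwQpos, hwE_eq, hwQ_eq]
      exact hwmE_le
    calc (∫ x in E, w x) / (∫ x in Q, w x) ≤ (1-δ)^k0 := hdiv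
    _ ≤ (1-δ)⁻¹ * t ^ ε := hδk
    _ ≤ β * t ^ ε := mul_le_mul_of_nonneg_right hβδ (by positivity)

end
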